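/- Let R be a local Noetherian ring and M, N finitely generated R-modules with M ⊗_R N torsion-free. Then (M/torsion(M)) ⊗_R (N/torsion(N)) is isomorphic to M ⊗_R N; in particular all four modules M ⊗_R N, (M/torsion(M)) ⊗_R N, M ⊗_R (N/torsion(N)), and (M/torsion(M)) ⊗_R (N/torsion(N)) are torsion-free. -/

import Mathlib

open TensorProduct LinearMap

lemma aux_lTensor_torsion_le (R M N : Type) [CommRing R] [AddCommGroup M] [Module R M]
    [AddCommGroup N] [Module R N] :
    LinearMap.range (lTensor M (Submodule.torsion R N).subtype) ≤
      Submodule.torsion R (M ⊗[R] N) := by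
  rintro x ⟨y, rfl⟩
  induction y using TensorProduct.induction_on with
  | zero => simp
  | tmul m t =>
    obtain ⟨r, hr⟩ := t.2
    refine ⟨r, ?_⟩
    have ht : (r : R) • (t : N) = 0 := hr
    rw [lTensor_tmul, Submodule.coe_subtype, Submonoid.smul_def, ← tmul_smul, ht, tmul_zero]
  | add a b ha hb => rw [map_add]; exact (Submodule.torsion R _).add_mem ha hb

lemma aux_rTensor_torsion_le (R M N : Type) [CommRing R] [AddCommGroup M] [Module R M]
    [AddCommGroup N] [Module R N] :
    LinearMap.range (rTensor N (Submodule.torsion R M).subtype) ≤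
      Submodule.torsion R (M ⊗[R] N) := by
  rintro x ⟨y, rfl⟩
  induction y using TensorProduct.induction_on with
  | zero => simp
  | tmul t n =>
    obtain ⟨r, hr⟩ := t.2
    refine ⟨r, ?_⟩
    have ht : (r : R) • (t : M) = 0 := hr
    rw [rTensor_tmul, Submodule.coe_subtype, Submonoid.smul_def, smul_tmul', ht, zero_tmul]
  | add a b ha hb => rw [map_add]; exact (Submodule.torsion R _).add_mem ha hb

lemma aux_torsion_eq_bot_of_bij {R A B : Type} [CommRing R] [AddCommGroup A] [Module R A]
    [AddCommGroup B] [Module R B] (f : A →ₗ[R] B) (hf : Function.Bijective f)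
    (h : Submodule.torsion R A = ⊥) : Submodule.torsion R B = ⊥ := by
  rw [eq_bot_iff]
  rintro y ⟨r, hr⟩
  obtain ⟨x, rfl⟩ := hf.2 y
  have h0 : (r : R) • x = 0 := hf.1 (by rw [map_smul]; simpa [Submonoid.smul_def] using hr)
  have hx : x ∈ Submodule.torsion R A := ⟨r, h0⟩
  rw [h] at hx
  simp [(Submodule.mem_bot R).mp hx]

/-- If `M ⊗[R] N` is torsion-free, then `(M/torsion M) ⊗ (N/torsion N) ≅ M ⊗ N`
(via the natural map) and all four modules are torsion-free. -/
theorem stmt1 (R : Type) [CommRing R] [IsNoetherianRing R] [IsLocalRing R]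
    (M N : Type) [AddCommGroup M] [Module R M] [AddCommGroup N] [Module R N]
    [Module.Finite R M] [Module.Finite R N]
    (h : Submodule.torsion R (TensorProduct R M N) = ⊥) :
    Function.Bijective
      (TensorProduct.map (Submodule.torsion R M).mkQ (Submodule.torsion R N).mkQ) ∧
    Submodule.torsion R (TensorProduct R (M ⧸ Submodule.torsion R M) N) = ⊥ ∧
    Submodule.torsion R (TensorProduct R M (N ⧸ Submodule.torsion R N)) = ⊥ ∧
    Submodule.torsion R
      (TensorProduct R (M ⧸ Submodule.torsion R M) (N ⧸ Submodule.torsion R N)) = ⊥ := by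
  have hbij : Function.Bijective
      (TensorProduct.map (Submodule.torsion R M).mkQ (Submodule.torsion R N).mkQ) := by
    constructor
    · rw [← LinearMap.ker_eq_bot,
        TensorProduct.map_ker (LinearMap.exact_subtype_mkQ _) ((Submodule.torsion R M).mkQ_surjective)
          (LinearMap.exact_subtype_mkQ _) ((Submodule.torsion R N).mkQ_surjective)]
      rw [eq_bot_iff, ← h]
      exact sup_le (aux_lTensor_torsion_le R M N) (aux_rTensor_torsion_le R M N)
    · exact TensorProduct.map_surjective ((Submodule.torsion R M).mkQ_surjective)
        ((Submodule.torsion R N).mkQ_surjective)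
  have hr : Function.Bijective (rTensor N (Submodule.torsion R M).mkQ) := by
    constructor
    · rw [← LinearMap.ker_eq_bot, rTensor_mkQ, eq_bot_iff, ← h]
      exact aux_rTensor_torsion_le R M N
    · exact rTensor_surjective N ((Submodule.torsion R M).mkQ_surjective)
  have hl : Function.Bijective (lTensor M (Submodule.torsion R N).mkQ) := by
    constructor
    · rw [← LinearMap.ker_eq_bot, lTensor_mkQ, eq_bot_iff, ← h]
      exact aux_lTensor_torsion_le R M N
    · exact lTensor_surjective M ((Submodule.torsion R N).mkQ_surjective)
  exact ⟨hbij, aux_torsion_eq_bot_of_bij _ hr h, aux_torsion_eq_bot_of_bij _ hl h,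
    aux_torsion_eq_bot_of_bij _ hbij h⟩
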